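/- Let d ≥ 3, δ = ⌊d/2⌋, and let n > d be an integer. Let g_0, …, g_δ be integers with g_0 = 1 and g_i ≥ 0 for all 1 ≤ i ≤ δ, and define f_j = Σ_{i=0}^{δ} g_i·m_{i,j} for 0 ≤ j ≤ d−1. Let gS_0 = 1, gS_1 = n−d−1, and gS_i = 0 for 2 ≤ i ≤ δ, and define fS_j = Σ_{i=0}^{δ} gS_i·m_{i,j}. If fS_r ≤ f_r for some integer r with 0 ≤ r ≤ d−2, then fS_s ≤ f_s for every integer s with r < s ≤ d−1. -/

import Mathlib

/-- The entry `m_{i,j} = C(d+1-i, d-j) - C(i, d-j)` of the matrix `M_d`. -/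
def mMat (d i j : ℕ) : ℤ :=
  ((d + 1 - i).choose (d - j) : ℤ) - (i.choose (d - j) : ℤ)

/-- The g-vector `(1, n-d-1, 0, …, 0)` of the stacked polytope `S(n,d)`. -/
def gStacked (n d i : ℕ) : ℤ :=
  if i = 0 then 1 else if i = 1 then (n : ℤ) - d - 1 else 0

/-- Key numeric inequality: `(d-i)·C(i,k) ≤ (i-1)·C(d+1-i,k)` for `k ≥ 2`, `2i ≤ d`. -/
lemma key_ineq (d i k : ℕ) (h2 : 2 ≤ k) (hid : 2 * i ≤ d) :
    (d - i) * i.choose k ≤ (i - 1) * (d + 1 - i).choose k := by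
  rcases lt_or_ge i k with h | hki
  · rw [Nat.choose_eq_zero_of_lt h, Nat.mul_zero]; exact Nat.zero_le _
  -- now k ≤ i, so i ≥ 2
  obtain ⟨k', rfl⟩ : ∃ k', k = k' + 2 := ⟨k - 2, by omega⟩
  obtain ⟨m, rfl⟩ : ∃ m, i = m + 2 := ⟨i - 2, by omega⟩
  set p := d - (m + 2) - 1 with hp
  have hb : d + 1 - (m + 2) = p + 2 := by omega
  have hd1 : (d - (m + 2) : ℕ) = p + 1 := by omega
  have hdesc : (d - (m + 2)) * (m + 2).descFactorial (k' + 2)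
      ≤ (m + 1) * (d + 1 - (m + 2)).descFactorial (k' + 2) := by
    rw [hb, hd1, Nat.succ_descFactorial_succ, Nat.succ_descFactorial_succ,
      Nat.succ_descFactorial_succ, Nat.succ_descFactorial_succ]
    have hA : m.descFactorial k' ≤ p.descFactorial k' :=
      Nat.descFactorial_le _ (by omega)
    calc (p + 1) * ((m + 2) * ((m + 1) * m.descFactorial k'))
        = (m + 1) * ((m + 2) * ((p + 1) * m.descFactorial k')) := by ring
      _ ≤ (m + 1) * ((p + 2) * ((p + 1) * p.descFactorial k')) := by
          apply Nat.mul_le_mul_left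
          exact Nat.mul_le_mul (by omega) (Nat.mul_le_mul_left _ hA)
  rw [Nat.descFactorial_eq_factorial_mul_choose, Nat.descFactorial_eq_factorial_mul_choose]
    at hdesc
  refine Nat.le_of_mul_le_mul_left ?_ (Nat.factorial_pos (k' + 2))
  calc Nat.factorial (k' + 2) * ((d - (m + 2)) * (m + 2).choose (k' + 2))
      = (d - (m + 2)) * (Nat.factorial (k' + 2) * (m + 2).choose (k' + 2)) := by ring
    _ ≤ (m + 1) * (Nat.factorial (k' + 2) * (d + 1 - (m + 2)).choose (k' + 2)) := hdesc
    _ = Nat.factorial (k' + 2) * ((m + 2 - 1) * (d + 1 - (m + 2)).choose (k' + 2)) := by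
        rw [show m + 2 - 1 = m + 1 from rfl]; ring

/-- The natural-number comparison inequality. -/
lemma comp_nat (d i a : ℕ) (ha : 3 ≤ a) (had : a ≤ d) (hi : 1 ≤ i) (hid : 2 * i ≤ d) :
    d.choose a * (i.choose (a - 1)) + d.choose (a - 1) * ((d + 1 - i).choose a)
      ≤ d.choose a * ((d + 1 - i).choose (a - 1)) + d.choose (a - 1) * (i.choose a) := by
  obtain ⟨c, rfl⟩ : ∃ c, a = c + 1 := ⟨a - 1, by omega⟩
  simp only [Nat.add_sub_cancel]
  set b := d + 1 - i with hbdef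
  have hc2 : 2 ≤ c := by omega
  have hbd : b ≤ d := by omega
  -- identities (c+1)*C(n,c+1) = (n-c)*C(n,c)
  have hid1 : d.choose (c + 1) * (c + 1) = d.choose c * (d - c) := Nat.choose_succ_right_eq d c
  have hid2 : b.choose (c + 1) * (c + 1) = b.choose c * (b - c) := Nat.choose_succ_right_eq b c
  have hid3 : i.choose (c + 1) * (c + 1) = i.choose c * (i - c) := Nat.choose_succ_right_eq i c
  have hdc : 0 < d - c := by omega
  have hDpos : 0 < d.choose (c + 1) := Nat.choose_pos (by omega)
  -- core reduced inequality
  have core : (d - c) * (i.choose c) + (b - c) * (b.choose c)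
      ≤ (d - c) * (b.choose c) + (i - c) * (i.choose c) := by
    rcases lt_or_ge i c with h | hci
    · rw [Nat.choose_eq_zero_of_lt h]
      have : b - c ≤ d - c := by omega
      calc (d - c) * 0 + (b - c) * b.choose c ≤ (d - c) * b.choose c := by
            simpa using Nat.mul_le_mul_right _ this
        _ ≤ (d - c) * b.choose c + (i - c) * 0 := by simp
    · have hkey : (d - i) * i.choose c ≤ (i - 1) * b.choose c := key_ineq d i c hc2 hid
      have e1 : d - c = (b - c) + (i - 1) := by omega
      have e2 : d - c = (i - c) + (d - i) := by omega
      calc (d - c) * (i.choose c) + (b - c) * (b.choose c)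
          = ((i - c) + (d - i)) * (i.choose c) + (b - c) * (b.choose c) := by rw [← e2]
        _ = (i - c) * i.choose c + ((d - i) * i.choose c + (b - c) * b.choose c) := by ring
        _ ≤ (i - c) * i.choose c + ((i - 1) * b.choose c + (b - c) * b.choose c) := by
            exact Nat.add_le_add_left (Nat.add_le_add_right hkey _) _
        _ = ((b - c) + (i - 1)) * (b.choose c) + (i - c) * (i.choose c) := by ring
        _ = (d - c) * (b.choose c) + (i - c) * (i.choose c) := by rw [← e1]
  -- multiply by (d - c), cancel the common positive factor d.choose (c+1)
  refine Nat.le_of_mul_le_mul_left ?_ hdc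
  calc (d - c) * (d.choose (c + 1) * i.choose c + d.choose c * b.choose (c + 1))
      = d.choose (c + 1) * ((d - c) * i.choose c) + (d.choose c * (d - c)) * b.choose (c + 1)
        := by ring
    _ = d.choose (c + 1) * ((d - c) * i.choose c)
        + d.choose (c + 1) * ((c + 1) * b.choose (c + 1)) := by rw [← hid1]; ring
    _ = d.choose (c + 1) * ((d - c) * i.choose c + (b - c) * b.choose c) := by
        have hid2' : (c + 1) * b.choose (c + 1) = (b - c) * b.choose c := by
          rw [Nat.mul_comm (c + 1), hid2, Nat.mul_comm]
        rw [hid2']; ring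
    _ ≤ d.choose (c + 1) * ((d - c) * b.choose c + (i - c) * i.choose c) :=
        Nat.mul_le_mul_left _ core
    _ = d.choose (c + 1) * ((d - c) * b.choose c) + d.choose (c + 1) * ((i - c) * i.choose c)
        := by ring
    _ = (d - c) * (d.choose (c + 1) * b.choose c + d.choose c * i.choose (c + 1)) := by
        have hid3' : (i - c) * i.choose c = (c + 1) * i.choose (c + 1) := by
          rw [Nat.mul_comm (i - c), ← hid3, Nat.mul_comm]
        rw [hid3', show (d.choose (c+1)) * ((c+1) * i.choose (c+1))
            = (d.choose (c+1) * (c+1)) * i.choose (c+1) by ring, hid1]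
        ring

lemma mMat_nonneg (d i j : ℕ) (h : 2 * i ≤ d + 1) : 0 ≤ mMat d i j := by
  have : i.choose (d - j) ≤ (d + 1 - i).choose (d - j) :=
    Nat.choose_le_choose _ (by omega)
  simpa [mMat, sub_nonneg] using (Int.ofNat_le.mpr this)

lemma mMat_one_pos (d j : ℕ) (hd : 3 ≤ d) (hj : j ≤ d - 2) : 0 < mMat d 1 j := by
  have h1 : (1 : ℕ).choose (d - j) = 0 := Nat.choose_eq_zero_of_lt (by omega)
  have h2 : 0 < d.choose (d - j) := Nat.choose_pos (by omega)
  have : d + 1 - 1 = d := by omega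
  rw [mMat, this, h1]
  simpa using Int.ofNat_lt.mpr h2

/-- The consecutive comparison inequality for the rows of `M_d`. -/
lemma comp_mMat (d i j : ℕ) (hd : 3 ≤ d) (hi : 1 ≤ i) (hid : 2 * i ≤ d)
    (hj : j + 1 ≤ d - 1) : mMat d 1 (j + 1) * mMat d i j ≤ mMat d 1 j * mMat d i (j + 1) := by
  have hone : d + 1 - 1 = d := by omega
  set a := d - j with hadef
  have ha2 : 2 ≤ a := by omega
  have had : a ≤ d := by omega
  have hj1 : d - (j + 1) = a - 1 := by omega
  rcases eq_or_lt_of_le ha2 with h2 | h3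
  · -- a = 2 : equality case
    have hja : d - j = 2 := h2.symm
    have hjb : d - (j + 1) = 1 := by omega
    have c2 : ∀ n : ℕ, 1 ≤ n → (n.choose 2 : ℤ) * 2 = (n : ℤ) * ((n : ℤ) - 1) := by
      intro n hn
      have h : n.choose 2 * 2 = n * (n - 1) := by
        simpa [Nat.choose_one_right] using Nat.choose_succ_right_eq n 1
      have h' := congrArg (Nat.cast (R := ℤ)) h
      push_cast [Nat.cast_sub hn] at h'
      linarith
    have hiI : ((d + 1 - i : ℕ) : ℤ) = (d : ℤ) + 1 - i := by
      have hle : i ≤ d + 1 := by omega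
      push_cast [Nat.cast_sub hle]; ring
    have f1 := c2 d (by omega)
    have f2 := c2 (d + 1 - i) (by omega)
    have f3 := c2 i hi
    rw [hiI] at f2
    rw [mMat, mMat, mMat, mMat, hja, hjb, hone]
    have e1 : (1 : ℕ).choose 1 = 1 := Nat.choose_self 1
    have e2 : (1 : ℕ).choose 2 = 0 := Nat.choose_eq_zero_of_lt (by norm_num)
    simp only [Nat.choose_one_right, e1, e2]
    rw [hiI]
    have heq : 2 * (((d : ℤ) - 1) * ((((d + 1 - i : ℕ)).choose 2 : ℤ) - (i.choose 2 : ℤ)))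
        = 2 * (((d.choose 2 : ℤ) - 0) * ((d : ℤ) + 1 - i - i)) := by
      linear_combination ((d:ℤ) - 1) * f2 - ((d:ℤ) - 1) * f3 - ((d:ℤ) + 1 - 2*(i:ℤ)) * f1
    push_cast at heq ⊢
    linarith [heq]
  · -- a ≥ 3
    have h1a : (1 : ℕ).choose a = 0 := Nat.choose_eq_zero_of_lt (by omega)
    have h1a' : (1 : ℕ).choose (a - 1) = 0 := Nat.choose_eq_zero_of_lt (by omega)
    have hcomp := comp_nat d i a h3 had hi hid
    rw [mMat, mMat, mMat, mMat, hj1, hone, ← hadef, h1a, h1a']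
    push_cast
    have := (Int.ofNat_le.mpr hcomp)
    push_cast at this
    nlinarith [this]

theorem lower_bounds (d n : ℕ) (hd : 3 ≤ d) (hn : d < n) (g : ℕ → ℤ)
    (hg0 : g 0 = 1)
    (hgnn : ∀ i, 1 ≤ i → i ≤ d / 2 → 0 ≤ g i)
    (r : ℕ) (hr : r ≤ d - 2)
    (hfr : ∑ i ∈ Finset.range (d / 2 + 1), gStacked n d i * mMat d i r ≤
           ∑ i ∈ Finset.range (d / 2 + 1), g i * mMat d i r) :
    ∀ s, r < s → s ≤ d - 1 →
      ∑ i ∈ Finset.range (d / 2 + 1), gStacked n d i * mMat d i s ≤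
        ∑ i ∈ Finset.range (d / 2 + 1), g i * mMat d i s := by
  set δ := d / 2 + 1 with hδ
  set F : ℕ → ℤ := fun j => ∑ i ∈ Finset.range δ, (g i - gStacked n d i) * mMat d i j with hF
  have hFeq : ∀ j, F j = (∑ i ∈ Finset.range δ, g i * mMat d i j)
      - ∑ i ∈ Finset.range δ, gStacked n d i * mMat d i j := by
    intro j
    rw [hF, ← Finset.sum_sub_distrib]
    exact Finset.sum_congr rfl fun i _ => by ring
  have claim : ∀ s, r ≤ s → s ≤ d - 1 → 0 ≤ F s := by
    intro s hs
    induction s, hs using Nat.le_induction with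
    | base => intro _; rw [hFeq]; linarith
    | succ s hrs ih =>
      intro hs1
      have hFs : 0 ≤ F s := ih (by omega)
      have hsd2 : s ≤ d - 2 := by omega
      have hpos := mMat_one_pos d s hd hsd2
      have hstep : mMat d 1 (s + 1) * F s ≤ mMat d 1 s * F (s + 1) := by
        rw [hF, Finset.mul_sum, Finset.mul_sum]
        apply Finset.sum_le_sum
        intro i hi
        rcases Nat.lt_or_ge i 1 with h0 | h1
        · interval_cases i
          simp [gStacked, hg0]
        rcases Nat.lt_or_ge i 2 with h1' | h2
        · have : i = 1 := by omega
          subst this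
          apply le_of_eq; ring
        · have higS : gStacked n d i = 0 := by
            simp [gStacked]; omega
          have hile : i ≤ d / 2 := by
            have := Finset.mem_range.mp hi; omega
          have hgi : 0 ≤ g i := hgnn i (by omega) hile
          have hcm := comp_mMat d i s hd (by omega) (by omega) (by omega)
          rw [higS, sub_zero]
          calc mMat d 1 (s + 1) * (g i * mMat d i s)
              = g i * (mMat d 1 (s + 1) * mMat d i s) := by ring
            _ ≤ g i * (mMat d 1 s * mMat d i (s + 1)) :=
                mul_le_mul_of_nonneg_left hcm hgi
            _ = mMat d 1 s * (g i * mMat d i (s + 1)) := by ring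
      have hm1nn : 0 ≤ mMat d 1 (s + 1) := mMat_nonneg d 1 (s + 1) (by omega)
      nlinarith [mul_nonneg hm1nn hFs]
  intro s hrs hs
  have := claim s (le_of_lt hrs) hs
  rw [hFeq] at this
  linarith
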